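/- If γ* is an optimal coupling for the 2-Wasserstein distance between ν = Σᵢ aᵢ δ_{xᵢ} and μ = Σⱼ bⱼ δ_{yⱼ} on ℝ^d (aᵢ > 0), and T* is the barycentric projection map induced by γ*, then W₂²(ν, μ) = W₂²(ν, T*_#ν) + Σᵢⱼ γ*ᵢⱼ‖T*(xᵢ) − yⱼ‖². -/

import Mathlib

open scoped BigOperators

/-- `γ` is a coupling of the weight vectors `a` and `b`: nonnegative entries,
row sums `a`, column sums `b`. -/
def IsCoupling {n m : ℕ} (a : Fin n → ℝ) (b : Fin m → ℝ) (γ : Fin n → Fin m → ℝ) : Prop :=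
  (∀ i j, 0 ≤ γ i j) ∧ (∀ i, ∑ j, γ i j = a i) ∧ (∀ j, ∑ i, γ i j = b j)

/-- Squared 2-Wasserstein distance between the finitely supported measures
`∑ i, a i • δ (x i)` and `∑ j, b j • δ (y j)`: the minimum quadratic transport
cost over couplings. -/
noncomputable def W2sq {n m d : ℕ} (a : Fin n → ℝ) (b : Fin m → ℝ)
    (x : Fin n → EuclideanSpace ℝ (Fin d)) (y : Fin m → EuclideanSpace ℝ (Fin d)) : ℝ :=
  sInf { c | ∃ γ : Fin n → Fin m → ℝ, IsCoupling a b γ ∧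
    c = ∑ i, ∑ j, γ i j * ‖x i - y j‖ ^ 2 }

theorem wasserstein_variance_decomposition {n m d : ℕ}
    (a : Fin n → ℝ) (b : Fin m → ℝ)
    (x : Fin n → EuclideanSpace ℝ (Fin d)) (y : Fin m → EuclideanSpace ℝ (Fin d))
    (ha : ∀ i, 0 < a i) (hasum : ∑ i, a i = 1)
    (hb : ∀ j, 0 ≤ b j) (hbsum : ∑ j, b j = 1)
    (γstar : Fin n → Fin m → ℝ) (hγstar : IsCoupling a b γstar)
    (hopt : ∀ γ : Fin n → Fin m → ℝ, IsCoupling a b γ →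
      ∑ i, ∑ j, γstar i j * ‖x i - y j‖ ^ 2 ≤ ∑ i, ∑ j, γ i j * ‖x i - y j‖ ^ 2)
    (Tstar : Fin n → EuclideanSpace ℝ (Fin d))
    (hTstar : ∀ i, Tstar i = ∑ j, (γstar i j / a i) • y j) :
    W2sq a b x y = W2sq a a x Tstar + ∑ i, ∑ j, γstar i j * ‖Tstar i - y j‖ ^ 2 := by
  classical
  obtain ⟨hγ0, hγrow, hγcol⟩ := hγstar
  have hA : ∀ k, ∑ j, γstar k j • y j = a k • Tstar k := by
    intro k
    rw [hTstar, Finset.smul_sum]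
    refine Finset.sum_congr rfl fun j _ => ?_
    rw [smul_smul, mul_div_cancel₀ _ (ha k).ne']
  -- Pythagorean identity around the barycenter
  have hpy : ∀ (k : Fin n) (v : EuclideanSpace ℝ (Fin d)),
      ∑ j, γstar k j * ‖v - y j‖ ^ 2
      = a k * ‖v - Tstar k‖ ^ 2 + ∑ j, γstar k j * ‖Tstar k - y j‖ ^ 2 := by
    intro k v
    have hz : ∑ j, γstar k j • (Tstar k - y j) = 0 := by
      simp only [smul_sub]
      rw [Finset.sum_sub_distrib, ← Finset.sum_smul, hγrow, hA, sub_self]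
    have key : ∀ j, ‖v - y j‖ ^ 2
        = ‖v - Tstar k‖ ^ 2 + (2 * (inner ℝ (v - Tstar k) (Tstar k - y j) : ℝ)
          + ‖Tstar k - y j‖ ^ 2) := by
      intro j
      have h : v - y j = (v - Tstar k) + (Tstar k - y j) := by abel
      rw [h, norm_add_sq_real]; ring
    calc ∑ j, γstar k j * ‖v - y j‖ ^ 2
        = ∑ j, (γstar k j * ‖v - Tstar k‖ ^ 2
            + (2 * (inner ℝ (v - Tstar k) (γstar k j • (Tstar k - y j)) : ℝ)
              + γstar k j * ‖Tstar k - y j‖ ^ 2)) := by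
          refine Finset.sum_congr rfl fun j _ => ?_
          rw [key j, real_inner_smul_right]; ring
      _ = a k * ‖v - Tstar k‖ ^ 2 + ∑ j, γstar k j * ‖Tstar k - y j‖ ^ 2 := by
          rw [Finset.sum_add_distrib, Finset.sum_add_distrib, ← Finset.sum_mul, hγrow,
            ← Finset.mul_sum, ← inner_sum, hz, inner_zero_right, mul_zero, zero_add]
  set D : ℝ := ∑ i, a i * ‖x i - Tstar i‖ ^ 2 with hD
  set C : ℝ := ∑ i, ∑ j, γstar i j * ‖Tstar i - y j‖ ^ 2 with hC
  have hsplit : ∑ i, ∑ j, γstar i j * ‖x i - y j‖ ^ 2 = D + C := by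
    rw [hD, hC, ← Finset.sum_add_distrib]
    exact Finset.sum_congr rfl fun i _ => hpy i (x i)
  have hW1 : W2sq a b x y = ∑ i, ∑ j, γstar i j * ‖x i - y j‖ ^ 2 := by
    apply IsLeast.csInf_eq
    constructor
    · exact ⟨γstar, ⟨hγ0, hγrow, hγcol⟩, rfl⟩
    · rintro c ⟨γ, hγ, rfl⟩
      exact hopt γ hγ
  have hW2 : W2sq a a x Tstar = D := by
    apply IsLeast.csInf_eq
    constructor
    · refine ⟨fun i k => if i = k then a i else 0, ⟨?_, ?_, ?_⟩, ?_⟩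
      · intro i k
        by_cases h : i = k <;> simp [h, (ha k).le]
      · intro i; simp
      · intro k; simp
      · rw [hD]
        refine Finset.sum_congr rfl fun i _ => ?_
        simp [ite_mul]
    · rintro c ⟨σ, ⟨hσ0, hσrow, hσcol⟩, rfl⟩
      -- glue σ with γstar to get a coupling of a and b
      set γ' : Fin n → Fin m → ℝ := fun i j => ∑ k, σ i k * (γstar k j / a k) with hγ'
      have hγ'c : IsCoupling a b γ' := by
        refine ⟨?_, ?_, ?_⟩
        · intro i j
          exact Finset.sum_nonneg fun k _ =>
            mul_nonneg (hσ0 i k) (div_nonneg (hγ0 k j) (ha k).le)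
        · intro i
          rw [Finset.sum_comm]
          rw [← hσrow i]
          refine Finset.sum_congr rfl fun k _ => ?_
          rw [← Finset.mul_sum, ← Finset.sum_div, hγrow, div_self (ha k).ne', mul_one]
        · intro j
          rw [Finset.sum_comm]
          rw [← hγcol j]
          refine Finset.sum_congr rfl fun k _ => ?_
          rw [← Finset.sum_mul, hσcol, mul_comm, div_mul_cancel₀ _ (ha k).ne']
      have hcost : ∑ i, ∑ j, γ' i j * ‖x i - y j‖ ^ 2
          = (∑ i, ∑ k, σ i k * ‖x i - Tstar k‖ ^ 2) + C := by
        have step1 : ∀ i, ∑ j, γ' i j * ‖x i - y j‖ ^ 2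
            = ∑ k, (σ i k * ‖x i - Tstar k‖ ^ 2
              + σ i k / a k * ∑ j, γstar k j * ‖Tstar k - y j‖ ^ 2) := by
          intro i
          have : ∑ j, γ' i j * ‖x i - y j‖ ^ 2
              = ∑ k, σ i k / a k * ∑ j, γstar k j * ‖x i - y j‖ ^ 2 := by
            simp only [hγ', Finset.sum_mul]
            rw [Finset.sum_comm]
            refine Finset.sum_congr rfl fun k _ => ?_
            rw [Finset.mul_sum]
            refine Finset.sum_congr rfl fun j _ => ?_
            ring
          rw [this]
          refine Finset.sum_congr rfl fun k _ => ?_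
          rw [hpy k (x i), mul_add, ← mul_assoc, div_mul_cancel₀ _ (ha k).ne']
        calc ∑ i, ∑ j, γ' i j * ‖x i - y j‖ ^ 2
            = ∑ i, ∑ k, (σ i k * ‖x i - Tstar k‖ ^ 2
              + σ i k / a k * ∑ j, γstar k j * ‖Tstar k - y j‖ ^ 2) :=
              Finset.sum_congr rfl fun i _ => step1 i
          _ = (∑ i, ∑ k, σ i k * ‖x i - Tstar k‖ ^ 2)
              + ∑ i, ∑ k, σ i k / a k * ∑ j, γstar k j * ‖Tstar k - y j‖ ^ 2 := by
              rw [← Finset.sum_add_distrib]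
              exact Finset.sum_congr rfl fun i _ => Finset.sum_add_distrib
          _ = (∑ i, ∑ k, σ i k * ‖x i - Tstar k‖ ^ 2) + C := by
              congr 1
              rw [Finset.sum_comm, hC]
              refine Finset.sum_congr rfl fun k _ => ?_
              rw [← Finset.sum_mul, ← Finset.sum_div, hσcol, div_self (ha k).ne',
                one_mul]
      have := hopt γ' hγ'c
      rw [hsplit, hcost] at this
      linarith
  rw [hW1, hsplit, hW2]
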